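/- Define F(x, t, σ) = (σ+(1-σ)t)(1+x)/(σ+(1-σ)t+x) for x > 0, t ∈ [0,1], σ > 0. Then for x ≥ X0 > 0 and 0 ≤ t ≤ t0 ≤ 1, |F(x,t,σ) - σ| ≤ |1-σ|·t0·max(1,σ) + max(1,σ)²/X0. In particular, with X0 = (2e^{-v}) / (2ε^{1/4}) appropriately large and t0 = e^{v}ε^{1/4}/4, one obtains |F(x,t,σ) - σ| ≤ K ε^{1/4} for a constant K depending only on σ and v. -/

import Mathlib

noncomputable def F (x t σ : ℝ) : ℝ :=
  (σ + (1 - σ) * t) * (1 + x) / (σ + (1 - σ) * t + x)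

theorem F_estimate (σ : ℝ) (hσ : 0 < σ) :
    (∀ X0 t0 x t : ℝ, 0 < X0 → X0 ≤ x → 0 ≤ t → t ≤ t0 → t0 ≤ 1 →
      |F x t σ - σ| ≤ |1 - σ| * t0 * max 1 σ + (max 1 σ) ^ 2 / X0) ∧
    (∀ v : ℝ, 0 ≤ v → ∃ K > 0, ∀ ε ∈ Set.Ioo (0 : ℝ) 1, ∀ x t : ℝ,
      Real.exp (-v) / ε ^ ((1 : ℝ)/4) ≤ x → 0 ≤ t →
      t ≤ Real.exp v * ε ^ ((1 : ℝ)/4) / 4 → t ≤ 1 →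
      |F x t σ - σ| ≤ K * ε ^ ((1 : ℝ)/4)) := by
  have main : ∀ X0 t0 x t : ℝ, 0 < X0 → X0 ≤ x → 0 ≤ t → t ≤ t0 → t0 ≤ 1 →
      |F x t σ - σ| ≤ |1 - σ| * t0 * max 1 σ + (max 1 σ) ^ 2 / X0 := by
    intro X0 t0 x t hX0 hx ht htt0 ht01
    set M := max 1 σ with hM
    have hM1 : (1:ℝ) ≤ M := le_max_left _ _
    have hMσ : σ ≤ M := le_max_right _ _
    have ht1 : t ≤ 1 := htt0.trans ht01
    have hxpos : 0 < x := hX0.trans_le hx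
    set a := σ + (1 - σ) * t with ha
    have hapos : 0 < a := by
      rcases le_or_gt σ 1 with h | h
      · nlinarith
      · nlinarith
    have haM : a ≤ M := by
      rcases le_or_gt σ 1 with h | h
      · nlinarith
      · nlinarith
    have h1σM : |1 - σ| ≤ M := by
      rcases le_or_gt σ 1 with h | h
      · rw [abs_of_nonneg (by linarith)]; linarith
      · rw [abs_of_neg (by linarith)]; linarith
    have haxpos : 0 < a + x := by linarith
    have hkey : F x t σ - σ = (1 - σ) * (t * x + a) / (a + x) := by
      rw [F]
      rw [div_sub' haxpos.ne', div_eq_div_iff haxpos.ne' haxpos.ne', ha]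
      ring
    have hnum : 0 ≤ t * x + a := by positivity
    have habs : |F x t σ - σ| = |1 - σ| * ((t * x + a) / (a + x)) := by
      rw [hkey, abs_div, abs_mul, abs_of_nonneg hnum, abs_of_nonneg haxpos.le, mul_div_assoc]
    rw [habs]
    have hstep1 : (t * x + a) / (a + x) ≤ t + a / x := by
      rw [div_le_iff₀ haxpos]
      have h1 : 0 ≤ a / x := by positivity
      have h2 : a / x * x = a := div_mul_cancel₀ a hxpos.ne'
      nlinarith [mul_nonneg ht hapos.le, mul_nonneg h1 hapos.le]
    have hsplit : |1 - σ| * ((t * x + a) / (a + x)) ≤ |1 - σ| * t + |1 - σ| * (a / x) := by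
      calc |1 - σ| * ((t * x + a) / (a + x)) ≤ |1 - σ| * (t + a / x) :=
            mul_le_mul_of_nonneg_left hstep1 (abs_nonneg _)
        _ = |1 - σ| * t + |1 - σ| * (a / x) := by ring
    have h1 : |1 - σ| * t ≤ |1 - σ| * t0 * M := by
      have h0 : |1 - σ| * t ≤ |1 - σ| * t0 := mul_le_mul_of_nonneg_left htt0 (abs_nonneg _)
      nlinarith [mul_nonneg (mul_nonneg (abs_nonneg (1 - σ)) (ht.trans htt0)) (sub_nonneg.2 hM1)]
    have h2 : |1 - σ| * (a / x) ≤ M ^ 2 / X0 := by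
      rw [mul_div_assoc'] at *
      apply div_le_div₀ (by positivity) _ hX0 hx
      nlinarith [abs_nonneg (1 - σ)]
    linarith
  refine ⟨main, ?_⟩
  intro v hv
  set M := max 1 σ with hM
  have hM1 : (1:ℝ) ≤ M := le_max_left _ _
  refine ⟨|1 - σ| * Real.exp v * M / 4 + M ^ 2 * Real.exp v, by positivity, ?_⟩
  intro ε hε x t hx ht ht0 ht1
  obtain ⟨hε0, hε1⟩ := hε
  set e := ε ^ ((1:ℝ)/4) with he
  have hepos : 0 < e := Real.rpow_pos_of_pos hε0 _
  set X0 := Real.exp (-v) / e with hX0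
  have hX0pos : 0 < X0 := by positivity
  set t0 := min (Real.exp v * e / 4) 1 with ht0def
  have := main X0 t0 x t hX0pos hx ht (le_min ht0 ht1) (min_le_right _ _)
  have hinv : M ^ 2 / X0 = M ^ 2 * Real.exp v * e := by
    rw [hX0, Real.exp_neg]
    field_simp
  have ht0le : t0 ≤ Real.exp v * e / 4 := min_le_left _ _
  have h1 : |1 - σ| * t0 * M ≤ |1 - σ| * (Real.exp v * e / 4) * M := by
    have ht0nn : 0 ≤ t0 := le_min (by positivity) zero_le_one
    have := mul_le_mul_of_nonneg_left ht0le (abs_nonneg (1 - σ))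
    nlinarith [abs_nonneg (1 - σ)]
  calc |F x t σ - σ| ≤ |1 - σ| * t0 * M + M ^ 2 / X0 := this
    _ ≤ |1 - σ| * (Real.exp v * e / 4) * M + M ^ 2 * Real.exp v * e := by
        rw [hinv]; linarith [h1]
    _ = (|1 - σ| * Real.exp v * M / 4 + M ^ 2 * Real.exp v) * e := by ring
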